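/- arXiv:2009.14128 — 7 statements merged into one kernel-verified Lean document; each statement's English description precedes it below -/
import Mathlib

section
/- Let k be a field and (A,A⁺) a local Huber pair where A is a k-algebra with maximal ideal m. An element ω ∈ Ω_{A/k} lies in the submodule N of logarithmic differentials if and only if there exists a finite family (f_i, g_i)_{i∈I} of pairs of elements of A such that ω = Σ_i f_i • D(g_i) and v(f_i) · v(g_i) ≤ 1 for every i ∈ I. (In other words, N is exactly the unit ball of the Kähler seminorm on Ω_{A/k}.) -/
/-- The set of basic logarithmic differentials in `Ω_{A/k}` attached to a local Huber
pair `(A, A⁺)` (with `A⁺ = v.integer = {a : v a ≤ 1}`): the differentials `D a` for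
`a ∈ A⁺` together with the logarithmic differentials `g⁻¹ • D g` for `g ∈ A⁺` a unit
of `A`. -/
def logDiffSet (k : Type) [Field k] {Γ₀ : Type} [LinearOrderedCommGroupWithZero Γ₀]
    {A : Type} [CommRing A] [Algebra k A] (v : Valuation A Γ₀) : Set (Ω[A⁄k]) :=
  {ω | ∃ a : A, v a ≤ 1 ∧ ω = KaehlerDifferential.D k A a} ∪
  {ω | ∃ g : A, v g ≤ 1 ∧ ∃ h : IsUnit g,
    ω = (↑h.unit⁻¹ : A) • KaehlerDifferential.D k A g}

/-- `N`, the `A⁺`-submodule of `Ω_{A/k}` (with scalars restricted along `A⁺ ⊆ A`)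
generated by the basic logarithmic differentials; it is the image in `Ω_{A/k}` of the
module of logarithmic differentials of `A⁺` with its total log structure. -/
noncomputable def logDiff (k : Type) [Field k] {Γ₀ : Type}
    [LinearOrderedCommGroupWithZero Γ₀] {A : Type} [CommRing A] [Algebra k A]
    (v : Valuation A Γ₀) : Submodule v.integer (Ω[A⁄k]) :=
  Submodule.span v.integer (logDiffSet k v)

section Aux
variable (k : Type) [Field k] {Γ₀ : Type} [LinearOrderedCommGroupWithZero Γ₀]
    {A : Type} [CommRing A] [Algebra k A] (v : Valuation A Γ₀)

/-- `u • D u⁻¹ = -(u⁻¹ • D u)` for a unit `u`. -/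
lemma aux_dlog_inv (u : Aˣ) :
    (↑u : A) • KaehlerDifferential.D k A (↑u⁻¹ : A) =
      -((↑u⁻¹ : A) • KaehlerDifferential.D k A (↑u : A)) := by
  have h : KaehlerDifferential.D k A ((↑u : A) * (↑u⁻¹ : A)) = 0 := by
    rw [Units.mul_inv]; exact (KaehlerDifferential.D k A).map_one_eq_zero
  rw [Derivation.leibniz] at h
  linear_combination (norm := module) h

/-- If `v u⁻¹ ≤ 1` then `u • D u⁻¹` is a basic logarithmic differential. -/
lemma aux_mem_set (u : Aˣ) (h : v (↑u⁻¹ : A) ≤ 1) :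
    (↑u : A) • KaehlerDifferential.D k A (↑u⁻¹ : A) ∈ logDiffSet k v := by
  refine Or.inr ⟨(↑u⁻¹ : A), h, (u⁻¹).isUnit, ?_⟩
  have hu : ((u⁻¹ : Aˣ).isUnit).unit = u⁻¹ := Units.ext ((u⁻¹ : Aˣ).isUnit).unit_spec
  rw [hu, inv_inv]

/-- Valuation of the inverse of a unit with `1 ≤ v u` is `≤ 1`. -/
lemma aux_v_inv_le (u : Aˣ) (h : (1 : Γ₀) ≤ v (↑u : A)) : v (↑u⁻¹ : A) ≤ 1 := by
  have h1 : v (↑u : A) * v (↑u⁻¹ : A) = 1 := by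
    rw [← v.map_mul, Units.mul_inv, v.map_one]
  calc v (↑u⁻¹ : A) = 1 * v (↑u⁻¹ : A) := (one_mul _).symm
    _ ≤ v (↑u : A) * v (↑u⁻¹ : A) := mul_le_mul_left h _
    _ = 1 := h1
end Aux

section Key
variable (k : Type) [Field k] {Γ₀ : Type} [LinearOrderedCommGroupWithZero Γ₀]
    {A : Type} [CommRing A] [IsLocalRing A] [Algebra k A] (v : Valuation A Γ₀)

lemma aux_isUnit (hsupp : v.supp = IsLocalRing.maximalIdeal A) {f : A}
    (hf : ¬ v f ≤ 1) : IsUnit f := by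
  rw [← IsLocalRing.notMem_maximalIdeal, ← hsupp, Valuation.mem_supp_iff]
  intro h0
  exact hf (by rw [h0]; exact zero_le_one)

/-- Key step: a single term `f • D g` with `v f * v g ≤ 1` is in `logDiff`. -/
lemma aux_key (hsupp : v.supp = IsLocalRing.maximalIdeal A) {f g : A}
    (hfg : v f * v g ≤ 1) : f • KaehlerDifferential.D k A g ∈ logDiff k v := by
  by_cases hg : v g ≤ 1
  · by_cases hf : v f ≤ 1
    · have hD : KaehlerDifferential.D k A g ∈ logDiff k v :=
        Submodule.subset_span (Or.inl ⟨g, hg, rfl⟩)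
      exact Submodule.smul_mem _ (⟨f, hf⟩ : v.integer) hD
    · -- f is a unit with v f > 1
      obtain ⟨u, rfl⟩ := aux_isUnit v hsupp hf
      have hvu : (1 : Γ₀) ≤ v (↑u : A) := le_of_not_ge hf
      have hinv : v (↑u⁻¹ : A) ≤ 1 := aux_v_inv_le v u hvu
      have hprod : v ((↑u : A) * g) ≤ 1 := by rw [v.map_mul]; exact hfg
      have e1 : KaehlerDifferential.D k A ((↑u : A) * g) ∈ logDiff k v :=
        Submodule.subset_span (Or.inl ⟨(↑u : A) * g, hprod, rfl⟩)
      have e2 : (↑u : A) • KaehlerDifferential.D k A (↑u⁻¹ : A) ∈ logDiff k v :=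
        Submodule.subset_span (aux_mem_set k v u hinv)
      have mem : KaehlerDifferential.D k A ((↑u : A) * g) +
          ((↑u : A) * g) • ((↑u : A) • KaehlerDifferential.D k A (↑u⁻¹ : A)) ∈
          logDiff k v :=
        Submodule.add_mem _ e1
          (Submodule.smul_mem _ (⟨(↑u : A) * g, hprod⟩ : v.integer) e2)
      have key : (↑u : A) • KaehlerDifferential.D k A g =
          KaehlerDifferential.D k A ((↑u : A) * g) +
          ((↑u : A) * g) • ((↑u : A) • KaehlerDifferential.D k A (↑u⁻¹ : A)) := by
        rw [Derivation.leibniz, aux_dlog_inv, smul_neg, smul_smul]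
        have : (↑u : A) * g * (↑u⁻¹ : A) = g := by
          rw [mul_right_comm, Units.mul_inv, one_mul]
        rw [this]
        abel
      rw [key]; exact mem
  · -- g is a unit with v g > 1
    obtain ⟨u, rfl⟩ := aux_isUnit v hsupp hg
    have hvu : (1 : Γ₀) ≤ v (↑u : A) := le_of_not_ge hg
    have hinv : v (↑u⁻¹ : A) ≤ 1 := aux_v_inv_le v u hvu
    have hprod : v (-(f * (↑u : A))) ≤ 1 := by rw [v.map_neg, v.map_mul]; exact hfg
    have e2 : (↑u : A) • KaehlerDifferential.D k A (↑u⁻¹ : A) ∈ logDiff k v :=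
      Submodule.subset_span (aux_mem_set k v u hinv)
    have mem : (-(f * (↑u : A))) • ((↑u : A) • KaehlerDifferential.D k A (↑u⁻¹ : A)) ∈
        logDiff k v :=
      Submodule.smul_mem _ (⟨-(f * (↑u : A)), hprod⟩ : v.integer) e2
    have key : f • KaehlerDifferential.D k A (↑u : A) =
        (-(f * (↑u : A))) • ((↑u : A) • KaehlerDifferential.D k A (↑u⁻¹ : A)) := by
      rw [aux_dlog_inv, smul_neg, neg_smul, neg_neg, smul_smul]
      congr 1
      rw [mul_assoc, Units.mul_inv, mul_one]
    rw [key]; exact mem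
end Key


/-- For a local Huber pair `(A, A⁺)` over a field `k`, a differential
`ω ∈ Ω_{A/k}` lies in the submodule `N` of logarithmic differentials if and only
if there is a finite family `(fᵢ, gᵢ)` of pairs of elements of `A` with
`ω = Σ fᵢ • D gᵢ` and `v fᵢ * v gᵢ ≤ 1` for all `i`: `N` is exactly the unit
ball of the Kähler seminorm on `Ω_{A/k}`. -/
theorem logDiff_eq_unitBall_kaehlerSeminorm
    (k : Type) [Field k] (Γ₀ : Type) [LinearOrderedCommGroupWithZero Γ₀]
    (A : Type) [CommRing A] [IsLocalRing A] [Algebra k A]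
    (v : Valuation A Γ₀)
    (hsupp : v.supp = IsLocalRing.maximalIdeal A)
    (ω : Ω[A⁄k]) :
    ω ∈ logDiff k v ↔ ∃ (n : ℕ) (f g : Fin n → A),
      ω = ∑ i, f i • KaehlerDifferential.D k A (g i) ∧
      ∀ i, v (f i) * v (g i) ≤ 1 := by
  constructor
  · intro hω
    induction hω using Submodule.span_induction with
    | mem x hx =>
      rcases hx with ⟨a, ha, rfl⟩ | ⟨g, hg, hu, rfl⟩
      · exact ⟨1, fun _ => 1, fun _ => a, by simp, fun _ => by simpa using ha⟩
      · refine ⟨1, fun _ => (↑hu.unit⁻¹ : A), fun _ => g, by simp, fun _ => ?_⟩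
        have h1 : (↑hu.unit⁻¹ : A) * g = 1 := hu.val_inv_mul
        calc v (↑hu.unit⁻¹ : A) * v g = v ((↑hu.unit⁻¹ : A) * g) := (v.map_mul _ _).symm
          _ = v 1 := congrArg v h1
          _ ≤ 1 := le_of_eq v.map_one
    | zero => exact ⟨0, Fin.elim0, Fin.elim0, by simp, fun i => i.elim0⟩
    | add x y _ _ hx hy =>
      obtain ⟨n, f, g, rfl, hb⟩ := hx
      obtain ⟨m, f', g', rfl, hb'⟩ := hy
      refine ⟨n + m, Fin.append f f', Fin.append g g', ?_, ?_⟩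
      · rw [Fin.sum_univ_add]
        simp [Fin.append_left, Fin.append_right]
      · intro i
        refine Fin.addCases (fun j => ?_) (fun j => ?_) i
        · simpa [Fin.append_left] using hb j
        · simpa [Fin.append_right] using hb' j
    | smul a x _ hx =>
      obtain ⟨n, f, g, rfl, hb⟩ := hx
      refine ⟨n, fun i => (↑a : A) * f i, g, ?_, fun i => ?_⟩
      · have : (↑a : A) • (∑ i, f i • KaehlerDifferential.D k A (g i)) =
            ∑ i, ((↑a : A) * f i) • KaehlerDifferential.D k A (g i) := by
          rw [Finset.smul_sum]
          exact Finset.sum_congr rfl fun i _ => smul_smul _ _ _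
        exact this
      · rw [v.map_mul, mul_assoc]
        exact mul_le_one' a.2 (hb i)
  · rintro ⟨n, f, g, rfl, hb⟩
    exact Submodule.sum_mem _ fun i _ => aux_key k v hsupp (hb i)
end

section
/- Let k be a field and (A,A⁺) a local Huber pair where A is a k-algebra with maximal ideal m. Let f and g be elements of A with v(f) · v(g) ≤ 1. Then the element f • D(g) of Ω_{A/k} lies in the submodule N of logarithmic differentials. -/
lemma logdiff_unit (k : Type) [Field k] {Γ₀ : Type} [LinearOrderedCommGroupWithZero Γ₀]
    {A : Type} [CommRing A] [Algebra k A] (v : Valuation A Γ₀) (u : Aˣ) :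
    (↑u⁻¹ : A) • KaehlerDifferential.D k A (↑u : A) ∈ logDiff k v := by
  have h1 : v (↑u : A) * v (↑u⁻¹ : A) = 1 := by
    rw [← v.map_mul]; simp
  rcases le_or_gt (v (↑u : A)) 1 with h | h
  · apply Submodule.subset_span
    right
    refine ⟨(↑u : A), h, u.isUnit, ?_⟩
    rw [show u.isUnit.unit = u from Units.ext u.isUnit.unit_spec]
  · have h2 : v (↑u⁻¹ : A) ≤ 1 := by
      by_contra hc
      push_neg at hc
      have hinv : v (↑u⁻¹ : A) = (v (↑u : A))⁻¹ :=
        eq_inv_of_mul_eq_one_right h1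
      rw [hinv] at hc
      exact absurd (one_lt_inv_iff₀.mp hc).2 (not_lt.mpr h.le)
    have hmem : (↑u : A) • KaehlerDifferential.D k A (↑u⁻¹ : A) ∈ logDiff k v := by
      apply Submodule.subset_span
      right
      refine ⟨(↑u⁻¹ : A), h2, u⁻¹.isUnit, ?_⟩
      rw [show u⁻¹.isUnit.unit = u⁻¹ from Units.ext u⁻¹.isUnit.unit_spec, inv_inv]
    have key : (↑u⁻¹ : A) • KaehlerDifferential.D k A (↑u : A)
        = -((↑u : A) • KaehlerDifferential.D k A (↑u⁻¹ : A)) := by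
      have := (KaehlerDifferential.D k A).leibniz (↑u : A) (↑u⁻¹ : A)
      rw [Units.mul_inv] at this
      simp only [Derivation.map_one_eq_zero] at this
      exact eq_neg_of_add_eq_zero_right this.symm
    rw [key]
    exact neg_mem hmem

/-- For a local Huber pair `(A, A⁺)` over a field `k` and elements `f, g ∈ A`
with `v f * v g ≤ 1`, the differential `f • D g ∈ Ω_{A/k}` lies in the submodule
`N` of logarithmic differentials. -/
theorem smul_d_mem_logDiff
    (k : Type) [Field k] (Γ₀ : Type) [LinearOrderedCommGroupWithZero Γ₀]
    (A : Type) [CommRing A] [IsLocalRing A] [Algebra k A]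
    (v : Valuation A Γ₀)
    (hsupp : v.supp = IsLocalRing.maximalIdeal A)
    (f g : A) (hfg : v f * v g ≤ 1) :
    f • KaehlerDifferential.D k A g ∈ logDiff k v := by
  have hunit : ∀ a : A, (1 : Γ₀) < v a → IsUnit a := by
    intro a ha
    have h0 : v a ≠ 0 := fun h => by simp [h] at ha
    have : a ∉ v.supp := by
      simpa [Valuation.mem_supp_iff] using h0
    rw [hsupp] at this
    exact not_not.mp fun hn => this (IsLocalRing.mem_maximalIdeal a |>.mpr hn)
  rcases le_or_gt (v g) 1 with hg | hg
  · rcases le_or_gt (v f) 1 with hf | hf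
    · have : KaehlerDifferential.D k A g ∈ logDiff k v :=
        Submodule.subset_span (Or.inl ⟨g, hg, rfl⟩)
      exact Submodule.smul_mem _ (⟨f, hf⟩ : v.integer) this
    · obtain ⟨u, hu⟩ := hunit f hf
      have hgf : v (g * f) ≤ 1 := by rw [v.map_mul, mul_comm]; exact hfg
      have hDfg : KaehlerDifferential.D k A (f * g) ∈ logDiff k v :=
        Submodule.subset_span (Or.inl ⟨f * g, by rw [v.map_mul]; exact hfg, rfl⟩)
      have hgDf : g • KaehlerDifferential.D k A f ∈ logDiff k v := by
        have := Submodule.smul_mem (logDiff k v) (⟨g * f, hgf⟩ : v.integer)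
          (logdiff_unit k v u)
        have he : (⟨g * f, hgf⟩ : v.integer) • ((↑u⁻¹ : A) • KaehlerDifferential.D k A (↑u : A))
            = g • KaehlerDifferential.D k A f := by
          show (g * f) • ((↑u⁻¹ : A) • KaehlerDifferential.D k A (↑u : A))
            = g • KaehlerDifferential.D k A f
          rw [hu, smul_smul]
          congr 1
          rw [mul_assoc, ← hu]
          simp
        rwa [he] at this
      have key : f • KaehlerDifferential.D k A g
          = KaehlerDifferential.D k A (f * g) - g • KaehlerDifferential.D k A f := by
        have := (KaehlerDifferential.D k A).leibniz f g
        rw [this]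
        module
      rw [key]
      exact sub_mem hDfg hgDf
  · obtain ⟨u, hu⟩ := hunit g hg
    have hfg' : v (f * g) ≤ 1 := by rw [v.map_mul]; exact hfg
    have := Submodule.smul_mem (logDiff k v) (⟨f * g, hfg'⟩ : v.integer)
      (logdiff_unit k v u)
    have he : (⟨f * g, hfg'⟩ : v.integer) • ((↑u⁻¹ : A) • KaehlerDifferential.D k A (↑u : A))
        = f • KaehlerDifferential.D k A g := by
      show (f * g) • ((↑u⁻¹ : A) • KaehlerDifferential.D k A (↑u : A))
        = f • KaehlerDifferential.D k A g
      rw [hu, smul_smul]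
      congr 1
      rw [mul_assoc, ← hu]
      simp
    rwa [he] at this
end

section
/- Let k be a field and (A,A⁺) a local Huber pair where A is a k-algebra with maximal ideal m. Let p : Ω_{A/k} → Γ₀ be a function satisfying: (i) p(ω + ω') ≤ max(p(ω), p(ω')) for all ω, ω'; (ii) p(a • ω) = v(a) · p(ω) for all a ∈ A and ω; (iii) p(D a) ≤ 1 for every a ∈ A⁺; (iv) p(g⁻¹ • D g) ≤ 1 for every g ∈ A⁺ that is a unit of A; (v) p(D x) = 0 for every x ∈ m. Then for every ω ∈ Ω_{A/k} and every representation ω = Σ_i f_i • D(g_i) as a finite sum with f_i, g_i ∈ A, one has p(ω) ≤ max_i v(f_i) · v(g_i). (In other words, the Kähler seminorm is the maximal A-seminorm on Ω_{A/k} that is ≤ 1 on logarithmic differentials and vanishes on D x for x ∈ m.) -/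
/-- In a linearly ordered commutative group with zero, `0` is a bottom element;
this makes `Finset.sup` (the maximum, with value `0` on the empty family)
available. -/
noncomputable instance instOrderBotOfLinearOrderedCommGroupWithZero
    (Γ₀ : Type) [LinearOrderedCommGroupWithZero Γ₀] : OrderBot Γ₀ where
  bot := 0
  bot_le _ := zero_le'

/-- Maximality of the Kähler seminorm: for a local Huber pair `(A, A⁺)` over a
field `k`, any `Γ₀`-valued `A`-seminorm `p` on `Ω_{A/k}` (ultrametric and
multiplicative for the `A`-action) which is `≤ 1` on the logarithmic differentials
`D a` (`a ∈ A⁺`) and `g⁻¹ • D g` (`g ∈ A⁺` a unit of `A`) and vanishes on `D x`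
for `x` in the maximal ideal satisfies `p ω ≤ max_i (v fᵢ * v gᵢ)` for every
representation `ω = Σ fᵢ • D gᵢ`; hence `p` is dominated by the Kähler seminorm. -/
theorem seminorm_le_kaehlerSeminorm
    (k : Type) [Field k] (Γ₀ : Type) [LinearOrderedCommGroupWithZero Γ₀]
    (A : Type) [CommRing A] [IsLocalRing A] [Algebra k A]
    (v : Valuation A Γ₀)
    (hsupp : v.supp = IsLocalRing.maximalIdeal A)
    (p : Ω[A⁄k] → Γ₀)
    (hadd : ∀ ω ω' : Ω[A⁄k], p (ω + ω') ≤ max (p ω) (p ω'))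
    (hsmul : ∀ (a : A) (ω : Ω[A⁄k]), p (a • ω) = v a * p ω)
    (hd : ∀ a : A, v a ≤ 1 → p (KaehlerDifferential.D k A a) ≤ 1)
    (hlog : ∀ g : A, v g ≤ 1 → ∀ h : IsUnit g,
      p ((↑h.unit⁻¹ : A) • KaehlerDifferential.D k A g) ≤ 1)
    (hm : ∀ x ∈ IsLocalRing.maximalIdeal A, p (KaehlerDifferential.D k A x) = 0)
    (ω : Ω[A⁄k]) (n : ℕ) (f g : Fin n → A)
    (hω : ω = ∑ i, f i • KaehlerDifferential.D k A (g i)) :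
    p ω ≤ Finset.univ.sup fun i => v (f i) * v (g i) := by
  have p0 : p 0 = 0 := by
    have := hsmul 0 0
    simpa using this
  -- key lemma: p (D g) ≤ v g for all g
  have key : ∀ a : A, p (KaehlerDifferential.D k A a) ≤ v a := by
    intro a
    by_cases ha : a ∈ IsLocalRing.maximalIdeal A
    · rw [hm a ha]; exact zero_le'
    · have hu : IsUnit a := IsLocalRing.notMem_maximalIdeal.mp ha
      have hva : v a ≠ 0 := by
        intro h0
        exact ha (hsupp ▸ (by exact h0 : a ∈ v.supp))
      have hinv : v a * v (↑hu.unit⁻¹ : A) = 1 := by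
        rw [← v.map_mul]
        norm_num
      -- main estimate: v (a⁻¹) * p (D a) ≤ 1
      have main : v (↑hu.unit⁻¹ : A) * p (KaehlerDifferential.D k A a) ≤ 1 := by
        rcases le_or_gt (v a) 1 with h1 | h1
        · have := hlog a h1 hu
          rwa [hsmul] at this
        · -- use hlog on a⁻¹
          set b : A := (↑hu.unit⁻¹ : A) with hb
          have hub : IsUnit b := hu.unit⁻¹.isUnit
          have hvb : v b ≤ 1 := by
            by_contra hc
            push_neg at hc
            have : (1 : Γ₀) < v a * v b := by
              exact hc.trans_le (le_mul_of_one_le_left' h1.le)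
            rw [hinv] at this
            exact lt_irrefl _ this
          have hcoe : (↑hub.unit⁻¹ : A) = a := by
            have : hub.unit = hu.unit⁻¹ := Units.ext (by simp)
            rw [this]
            simp
          have hlb := hlog b hvb hub
          rw [hcoe] at hlb
          -- a • D b = -(b • D a)
          have hleib : a • KaehlerDifferential.D k A b
              = -(b • KaehlerDifferential.D k A a) := by
            have h1' : a * b = 1 := by simp [hb]
            have := (KaehlerDifferential.D k A).leibniz a b
            rw [h1'] at this
            rw [Derivation.map_one_eq_zero] at this
            rw [eq_neg_iff_add_eq_zero]
            exact this.symm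
          rw [hleib] at hlb
          have hneg : p (-(b • KaehlerDifferential.D k A a))
              = p (b • KaehlerDifferential.D k A a) := by
            have : (-(b • KaehlerDifferential.D k A a))
                = (-1 : A) • (b • KaehlerDifferential.D k A a) := by module
            rw [this, hsmul, v.map_neg, v.map_one, one_mul]
          rw [hneg, hsmul] at hlb
          exact hlb
      calc p (KaehlerDifferential.D k A a)
          = v a * (v (↑hu.unit⁻¹ : A) * p (KaehlerDifferential.D k A a)) := by
            rw [← mul_assoc, hinv, one_mul]
        _ ≤ v a * 1 := mul_le_mul_right main _
        _ = v a := mul_one _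
  -- sum estimate
  have hsum : ∀ (s : Finset (Fin n)),
      p (∑ i ∈ s, f i • KaehlerDifferential.D k A (g i))
        ≤ s.sup fun i => v (f i) * v (g i) := by
    intro s
    induction s using Finset.cons_induction with
    | empty =>
      rw [Finset.sum_empty, p0, Finset.sup_empty]
      exact le_of_eq rfl
    | cons j s hj ih =>
      rw [Finset.sum_cons, Finset.sup_cons]
      refine (hadd _ _).trans (max_le_max ?_ ih)
      rw [hsmul]
      exact mul_le_mul_right (key (g j)) _
  rw [hω]
  exact hsum Finset.univ
end

section
/- Let k be a field and (A,A⁺) a local Huber pair where A is a k-algebra with maximal ideal m. Let b ∈ A⁺ and suppose ω ∈ Ω_{A/k} lies in b • N, where N is the submodule of logarithmic differentials. Then there exists a finite family (f_i, g_i)_{i∈I} of pairs of elements of A such that ω = Σ_i f_i • D(g_i) and v(f_i) · v(g_i) ≤ v(b) for every i ∈ I. (This is the inequality |ω|_Ω ≤ |ω|_ad between the Kähler seminorm and the adic seminorm on logarithmic differentials.) -/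

theorem logDiff_aux
    (k : Type) [Field k] (Γ₀ : Type) [LinearOrderedCommGroupWithZero Γ₀]
    (A : Type) [CommRing A] [Algebra k A]
    (v : Valuation A Γ₀) (η : Ω[A⁄k]) (hη : η ∈ logDiff k v) :
    ∃ (n : ℕ) (f g : Fin n → A),
      η = ∑ i, f i • KaehlerDifferential.D k A (g i) ∧
      ∀ i, v (f i) * v (g i) ≤ 1 := by
  induction hη using Submodule.span_induction with
  | mem x hx =>
    rcases hx with ⟨a, ha, rfl⟩ | ⟨g, hg, h, rfl⟩
    · exact ⟨1, fun _ => 1, fun _ => a, by simp, fun i => by simp [v.map_one, ha]⟩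
    · refine ⟨1, fun _ => (↑h.unit⁻¹ : A), fun _ => g, by simp, fun i => ?_⟩
      rw [← v.map_mul]
      have : (↑h.unit⁻¹ : A) * g = 1 := h.val_inv_mul
      simp [this]
  | zero => exact ⟨0, ![], ![], by simp, fun i => i.elim0⟩
  | add x y hx hy ihx ihy =>
    obtain ⟨n, f, g, hsum, hle⟩ := ihx
    obtain ⟨m, f', g', hsum', hle'⟩ := ihy
    refine ⟨n + m, Fin.addCases f f', Fin.addCases g g', ?_, ?_⟩
    · rw [Fin.sum_univ_add]
      simp only [Fin.addCases_left, Fin.addCases_right]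
      rw [← hsum, ← hsum']
    · intro i
      refine Fin.addCases (fun j => ?_) (fun j => ?_) i <;>
        simp only [Fin.addCases_left, Fin.addCases_right]
      · exact hle j
      · exact hle' j
  | smul c x hx ihx =>
    obtain ⟨n, f, g, hsum, hle⟩ := ihx
    refine ⟨n, fun i => (c : A) * f i, g, ?_, fun i => ?_⟩
    · have : c • x = (c : A) • x := rfl
      rw [this, hsum, Finset.smul_sum]
      simp [smul_smul]
    · rw [v.map_mul, mul_assoc]
      calc v (c : A) * (v (f i) * v (g i)) ≤ 1 * 1 :=
        mul_le_mul' c.2 (hle i)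
      _ = 1 := by simp

/-- For a local Huber pair `(A, A⁺)` over a field `k`, `b ∈ A⁺`, and
`ω ∈ b • N` (where `N` is the submodule of logarithmic differentials), there is
a finite family `(fᵢ, gᵢ)` of pairs of elements of `A` with `ω = Σ fᵢ • D gᵢ`
and `v fᵢ * v gᵢ ≤ v b` for all `i`: the inequality `|ω|_Ω ≤ |ω|_ad` between
the Kähler seminorm and the adic seminorm on logarithmic differentials. -/
theorem kaehlerSeminorm_le_adicSeminorm
    (k : Type) [Field k] (Γ₀ : Type) [LinearOrderedCommGroupWithZero Γ₀]
    (A : Type) [CommRing A] [IsLocalRing A] [Algebra k A]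
    (v : Valuation A Γ₀)
    (hsupp : v.supp = IsLocalRing.maximalIdeal A)
    (b : A) (hb : v b ≤ 1) (ω : Ω[A⁄k])
    (hω : ∃ η ∈ logDiff k v, ω = b • η) :
    ∃ (n : ℕ) (f g : Fin n → A),
      ω = ∑ i, f i • KaehlerDifferential.D k A (g i) ∧
      ∀ i, v (f i) * v (g i) ≤ v b := by
  obtain ⟨η, hη, rfl⟩ := hω
  obtain ⟨n, f, g, hsum, hle⟩ := logDiff_aux k Γ₀ A v η hη
  refine ⟨n, fun i => b * f i, g, ?_, fun i => ?_⟩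
  · rw [hsum, Finset.smul_sum]
    simp [smul_smul]
  · rw [v.map_mul, mul_assoc]
    calc v b * (v (f i) * v (g i)) ≤ v b * 1 := mul_le_mul_right (hle i) _
    _ = v b := mul_one _
end

section
/- Let k be a field and (A,A⁺) a local Huber pair where A is a k-algebra with maximal ideal m. Then for every x ∈ m and every a⁺ ∈ A⁺ with a⁺ ∉ m, the differential D x lies in a⁺ • N, where N is the submodule of logarithmic differentials. (This expresses that the adic seminorm of D x on logarithmic differentials vanishes for x ∈ m.) -/
/-- For a local Huber pair `(A, A⁺)` over a field `k`, every `x` in the maximal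
ideal `m` of `A` and every `a⁺ ∈ A⁺ \ m` satisfy `D x ∈ a⁺ • N`, where `N`
is the submodule of logarithmic differentials: the adic seminorm of `D x` on
logarithmic differentials vanishes for `x ∈ m`. -/
theorem d_mem_smul_logDiff_of_mem_maximalIdeal
    (k : Type) [Field k] (Γ₀ : Type) [LinearOrderedCommGroupWithZero Γ₀]
    (A : Type) [CommRing A] [IsLocalRing A] [Algebra k A]
    (v : Valuation A Γ₀)
    (hsupp : v.supp = IsLocalRing.maximalIdeal A)
    (x : A) (hx : x ∈ IsLocalRing.maximalIdeal A)
    (a : A) (ha : v a ≤ 1) (ha' : a ∉ IsLocalRing.maximalIdeal A) :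
    ∃ η ∈ logDiff k v, KaehlerDifferential.D k A x = a • η := by

  have hu : IsUnit a := by
    by_contra h
    exact ha' (IsLocalRing.mem_maximalIdeal a |>.mpr h)
  set b : A := (↑hu.unit⁻¹ : A) with hbdef
  have hab : a * b = 1 := hu.mul_val_inv
  have hvx : v x = 0 := by
    rw [← Valuation.mem_supp_iff, hsupp]; exact hx
  have hbx : v (b * x) ≤ 1 := by
    rw [map_mul, hvx, mul_zero]; exact zero_le'
  refine ⟨KaehlerDifferential.D k A (b * x) +
    (⟨b * x, hbx⟩ : v.integer) • (b • KaehlerDifferential.D k A a), ?_, ?_⟩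
  · refine Submodule.add_mem _ ?_ ?_
    · exact Submodule.subset_span (Or.inl ⟨b * x, hbx, rfl⟩)
    · exact Submodule.smul_mem _ _
        (Submodule.subset_span (Or.inr ⟨a, ha, hu, rfl⟩))
  · have hx' : x = a * (b * x) := by
      rw [← mul_assoc, hab, one_mul]
    have hsub : ((⟨b * x, hbx⟩ : v.integer) • (b • KaehlerDifferential.D k A a) : Ω[A⁄k])
        = (b * x) • (b • KaehlerDifferential.D k A a) := rfl
    rw [smul_add, hsub, smul_smul, smul_smul]
    have h2 : a * (b * x) * b = b * x := by linear_combination (b * x) * hab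
    rw [h2]
    calc KaehlerDifferential.D k A x
        = KaehlerDifferential.D k A (a * (b * x)) := by rw [← hx']
      _ = a • KaehlerDifferential.D k A (b * x) +
          (b * x) • KaehlerDifferential.D k A a := Derivation.leibniz _ _ _
end

section
/- Let (A,A⁺) be a local Huber pair, with A a local ring with maximal ideal m. Then A is the localization of A⁺ at the multiplicative subset S := A⁺ \ m: every element of S is invertible in A, and every element of A can be written as a⁺ · s⁻¹ with a⁺ ∈ A⁺ and s ∈ S; in particular the inclusion A⁺ ⊆ A exhibits A as the localization of A⁺ at the submonoid S. -/
/-- For a local Huber pair `(A, A⁺)` (a local ring `A` with maximal ideal `m`,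
equipped with a valuation `v` supported at `m`, with `A⁺ = v.integer`), the ring
`A` is the localization of `A⁺` at the multiplicative subset `S = A⁺ \ m`:
every element of `S` is invertible in `A`, every element of `A` can be written
as `a⁺ * s⁻¹` with `a⁺ ∈ A⁺` and `s ∈ S`, and the inclusion `A⁺ ⊆ A` exhibits
`A` as the localization of `A⁺` at the submonoid `S`. -/
theorem localHuberPair_isLocalization
    (Γ₀ : Type) [LinearOrderedCommGroupWithZero Γ₀]
    (A : Type) [CommRing A] [IsLocalRing A]
    (v : Valuation A Γ₀)
    (hsupp : v.supp = IsLocalRing.maximalIdeal A) :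
    (∀ s : A, v s ≤ 1 → s ∉ IsLocalRing.maximalIdeal A → IsUnit s) ∧
    (∀ a : A, ∃ x s : A, v x ≤ 1 ∧ v s ≤ 1 ∧ s ∉ IsLocalRing.maximalIdeal A ∧
      ∃ h : IsUnit s, a = x * ↑h.unit⁻¹) ∧
    IsLocalization
      ((IsLocalRing.maximalIdeal A).primeCompl.comap (algebraMap v.integer A)) A := by
  have hunit : ∀ s : A, s ∉ IsLocalRing.maximalIdeal A → IsUnit s := by
    intro s hs
    by_contra h
    exact hs (IsLocalRing.mem_maximalIdeal s |>.mpr h)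
  have key : ∀ a : A, ∃ x s : A, v x ≤ 1 ∧ v s ≤ 1 ∧ s ∉ IsLocalRing.maximalIdeal A ∧
      ∃ h : IsUnit s, a = x * ↑h.unit⁻¹ := by
    intro a
    by_cases ha : v a ≤ 1
    · refine ⟨a, 1, ha, by simp, ?_, isUnit_one, by simp⟩
      intro h1
      exact (IsLocalRing.maximalIdeal.isMaximal A).ne_top
        ((IsLocalRing.maximalIdeal A).eq_top_of_isUnit_mem h1 isUnit_one)
    · have hva : v a ≠ 0 := by
        intro h0; exact ha (h0 ▸ zero_le')
      have ham : a ∉ IsLocalRing.maximalIdeal A := by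
        rw [← hsupp]; exact fun hmem => hva hmem
      have hu : IsUnit a := hunit a ham
      set u := hu.unit with hu_def
      have hmul : (↑u⁻¹ : A) * a = 1 := by
        rw [← hu.unit_spec]; exact u.inv_mul
      have hvinv : v (↑u⁻¹ : A) ≤ 1 := by
        have h1 : v (↑u⁻¹ : A) * v a = 1 := by rw [← v.map_mul, hmul, v.map_one]
        have heq : v (↑u⁻¹ : A) = (v a)⁻¹ := eq_inv_of_mul_eq_one_left h1
        rw [heq]
        exact inv_le_one_of_one_le₀ (le_of_lt (lt_of_not_ge ha))
      have hinvm : (↑u⁻¹ : A) ∉ IsLocalRing.maximalIdeal A := by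
        intro hmem
        exact IsLocalRing.maximalIdeal.isMaximal A |>.ne_top
          ((IsLocalRing.maximalIdeal A).eq_top_of_isUnit_mem hmem u⁻¹.isUnit)
      refine ⟨1, ↑u⁻¹, by simp, hvinv, hinvm, u⁻¹.isUnit, ?_⟩
      rw [one_mul]
      have : ((u⁻¹.isUnit.unit)⁻¹ : Aˣ) = u := by
        ext; exact Units.inv_eq_of_mul_eq_one_right (by rw [u⁻¹.isUnit.unit_spec]; exact u.inv_mul)
      rw [this]; exact hu.unit_spec.symm
  refine ⟨fun s _ hs => hunit s hs, key, ?_⟩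
  constructor
  constructor
  · rintro ⟨s, hs⟩
    exact hunit _ (by simpa [Submonoid.mem_comap, Ideal.primeCompl] using hs)
  · intro a
    obtain ⟨x, s, hx, hs, hsm, hu, hax⟩ := key a
    refine ⟨⟨⟨x, hx⟩, ⟨⟨s, hs⟩, ?_⟩⟩, ?_⟩
    · exact hsm
    · show a * s = x
      rw [hax, mul_assoc]
      nth_rewrite 2 [← hu.unit_spec]
      rw [Units.inv_mul, mul_one]
  · intro x y h
    refine ⟨1, ?_⟩
    have : (x : A) = y := h
    simpa using Subtype.ext this
end

section
/- Let (A,A⁺), (B,B⁺), (C,C⁺) be strict pairs of commutative rings, and let A → B and A → C be ring homomorphisms mapping A⁺ into B⁺ and into C⁺ respectively. Let D := B ⊗_A C and let D⁺ be the subring of D generated by the images of B⁺ (under b ↦ b ⊗ 1) and of C⁺ (under c ↦ 1 ⊗ c). Then (D, D⁺) is strict; more precisely, every element d ∈ D can be written as d = d⁺ · (s ⊗ t)⁻¹ with d⁺ ∈ D⁺, s ∈ B⁺ a unit of B, and t ∈ C⁺ a unit of C (note s ⊗ t ∈ D⁺ is then a unit of D). Consequently D is the localization of D⁺ at the submonoid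 D⁺ ∩ D^× of elements of D⁺ that are invertible in D. -/
open scoped TensorProduct

/-- A pair `(A, A⁺)` of a commutative ring and a subring is *strict* if every
element of `A` can be written as `a⁺ * s⁻¹` with `a⁺ ∈ A⁺` and `s ∈ A⁺` a unit
of `A` (equivalently, `A` is the localization of `A⁺` at `A⁺ ∩ A^×`). -/
def IsStrictPair {A : Type} [CommRing A] (Ap : Subring A) : Prop :=
  ∀ a : A, ∃ x s : Ap, ∃ h : IsUnit (s : A), a = (x : A) * ↑h.unit⁻¹

/-- The submonoid `A⁺ ∩ A^×` of a subring `A⁺ ⊆ A`: the elements of `A⁺` that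
are invertible in `A`. -/
def Subring.unitsIn {A : Type} [CommRing A] (Ap : Subring A) : Submonoid Ap where
  carrier := {x | IsUnit (x : A)}
  one_mem' := by simp
  mul_mem' := by
    intro a b ha hb
    simpa using ha.mul hb

theorem isLocalization_of_isStrictPair {A : Type} [CommRing A] (Ap : Subring A)
    (h : IsStrictPair Ap) : IsLocalization Ap.unitsIn A where
  map_units := fun y => y.2
  surj := fun z => by
    obtain ⟨x, s, hs, hz⟩ := h z
    refine ⟨(x, ⟨s, hs⟩), ?_⟩
    have : z * (s : A) = (x : A) := by
      rw [hz, mul_assoc, IsUnit.val_inv_mul, mul_one]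
    exact this
  exists_of_eq := fun {x y} h => ⟨1, by
    have : x = y := Subtype.ext h
    rw [this]⟩

/-- Let `(A, A⁺)`, `(B, B⁺)`, `(C, C⁺)` be strict pairs, with `B`, `C` algebras
over `A` whose structure maps send `A⁺` into `B⁺` resp. `C⁺`.  Let `D = B ⊗[A] C`
and let `D⁺` be the subring of `D` generated by the images of `B⁺` and `C⁺`.
Then every `d ∈ D` can be written as `d = d⁺ * (s ⊗ t)⁻¹` with `d⁺ ∈ D⁺`,
`s ∈ B⁺` a unit of `B`, `t ∈ C⁺` a unit of `C` (and `s ⊗ t` a unit of `D`);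
in particular `(D, D⁺)` is strict, and `D` is the localization of `D⁺` at the
submonoid `D⁺ ∩ D^×`. -/
theorem isStrictPair_tensorProduct
    (A B C : Type) [CommRing A] [CommRing B] [CommRing C]
    [Algebra A B] [Algebra A C]
    (Ap : Subring A) (Bp : Subring B) (Cp : Subring C)
    (hA : IsStrictPair Ap) (hB : IsStrictPair Bp) (hC : IsStrictPair Cp)
    (hAB : ∀ a ∈ Ap, algebraMap A B a ∈ Bp)
    (hAC : ∀ a ∈ Ap, algebraMap A C a ∈ Cp)
    (Dp : Subring (B ⊗[A] C))
    (hDp : Dp = Subring.closure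
      ({x | ∃ b ∈ Bp, x = b ⊗ₜ[A] (1 : C)} ∪ {x | ∃ c ∈ Cp, x = (1 : B) ⊗ₜ[A] c})) :
    (∀ d : B ⊗[A] C, ∃ dp ∈ Dp, ∃ (s : B) (t : C), s ∈ Bp ∧ IsUnit s ∧ t ∈ Cp ∧
      IsUnit t ∧ ∃ h : IsUnit (s ⊗ₜ[A] t : B ⊗[A] C), d = dp * ↑h.unit⁻¹) ∧
    IsStrictPair Dp ∧
    IsLocalization Dp.unitsIn (B ⊗[A] C) := by
  -- membership lemmas
  have memL : ∀ b ∈ Bp, (b ⊗ₜ[A] (1 : C)) ∈ Dp := fun b hb => by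
    rw [hDp]; exact Subring.subset_closure (Or.inl ⟨b, hb, rfl⟩)
  have memR : ∀ c ∈ Cp, ((1 : B) ⊗ₜ[A] c) ∈ Dp := fun c hc => by
    rw [hDp]; exact Subring.subset_closure (Or.inr ⟨c, hc, rfl⟩)
  have memT : ∀ b ∈ Bp, ∀ c ∈ Cp, (b ⊗ₜ[A] c) ∈ Dp := fun b hb c hc => by
    have : b ⊗ₜ[A] c = (b ⊗ₜ[A] (1 : C)) * ((1 : B) ⊗ₜ[A] c) := by
      rw [Algebra.TensorProduct.tmul_mul_tmul, mul_one, one_mul]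
    rw [this]
    exact Dp.mul_mem (memL b hb) (memR c hc)
  -- unit lemma
  have unitT : ∀ {s : B} {t : C}, IsUnit s → IsUnit t →
      IsUnit (s ⊗ₜ[A] t : B ⊗[A] C) := fun {s t} hs ht => by
    have : (s ⊗ₜ[A] t : B ⊗[A] C) = (s ⊗ₜ[A] (1 : C)) * ((1 : B) ⊗ₜ[A] t) := by
      rw [Algebra.TensorProduct.tmul_mul_tmul, mul_one, one_mul]
    rw [this]
    exact (hs.map (Algebra.TensorProduct.includeLeft : B →ₐ[A] B ⊗[A] C)).mul
      (ht.map (Algebra.TensorProduct.includeRight : C →ₐ[A] B ⊗[A] C))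
  -- key claim
  have key : ∀ d : B ⊗[A] C, ∃ (s : B) (t : C), s ∈ Bp ∧ IsUnit s ∧ t ∈ Cp ∧
      IsUnit t ∧ d * (s ⊗ₜ[A] t) ∈ Dp := by
    intro d
    induction d with
    | zero =>
        exact ⟨1, 1, Bp.one_mem, isUnit_one, Cp.one_mem, isUnit_one, by
          simpa using Dp.zero_mem⟩
    | tmul b c =>
        obtain ⟨x, s, hs, hb⟩ := hB b
        obtain ⟨y, t, ht, hc⟩ := hC c
        refine ⟨s, t, s.2, hs, t.2, ht, ?_⟩
        have hbs : b * (s : B) = (x : B) := by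
          rw [hb, mul_assoc, IsUnit.val_inv_mul, mul_one]
        have hct : c * (t : C) = (y : C) := by
          rw [hc, mul_assoc, IsUnit.val_inv_mul, mul_one]
        rw [Algebra.TensorProduct.tmul_mul_tmul, hbs, hct]
        exact memT _ x.2 _ y.2
    | add d₁ d₂ h₁ h₂ =>
        obtain ⟨s₁, t₁, hs₁, hus₁, ht₁, hut₁, hd₁⟩ := h₁
        obtain ⟨s₂, t₂, hs₂, hus₂, ht₂, hut₂, hd₂⟩ := h₂
        refine ⟨s₁ * s₂, t₁ * t₂, Bp.mul_mem hs₁ hs₂, hus₁.mul hus₂,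
          Cp.mul_mem ht₁ ht₂, hut₁.mul hut₂, ?_⟩
        have : ((s₁ * s₂) ⊗ₜ[A] (t₁ * t₂) : B ⊗[A] C)
            = (s₁ ⊗ₜ[A] t₁) * (s₂ ⊗ₜ[A] t₂) := by
          rw [Algebra.TensorProduct.tmul_mul_tmul]
        rw [this, add_mul]
        refine Dp.add_mem ?_ ?_
        · rw [← mul_assoc]
          exact Dp.mul_mem hd₁ (memT _ hs₂ _ ht₂)
        · rw [mul_comm (s₁ ⊗ₜ[A] t₁), ← mul_assoc]
          exact Dp.mul_mem hd₂ (memT _ hs₁ _ ht₁)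
  have main : ∀ d : B ⊗[A] C, ∃ dp ∈ Dp, ∃ (s : B) (t : C), s ∈ Bp ∧ IsUnit s ∧
      t ∈ Cp ∧ IsUnit t ∧ ∃ h : IsUnit (s ⊗ₜ[A] t : B ⊗[A] C),
      d = dp * ↑h.unit⁻¹ := by
    intro d
    obtain ⟨s, t, hs, hus, ht, hut, hd⟩ := key d
    have h := unitT hus hut
    refine ⟨d * (s ⊗ₜ[A] t), hd, s, t, hs, hus, ht, hut, h, ?_⟩
    rw [mul_assoc, IsUnit.mul_val_inv, mul_one]
  have strict : IsStrictPair Dp := by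
    intro d
    obtain ⟨dp, hdp, s, t, hs, hus, ht, hut, h, hd⟩ := main d
    exact ⟨⟨dp, hdp⟩, ⟨s ⊗ₜ[A] t, memT _ hs _ ht⟩, h, hd⟩
  exact ⟨main, strict, isLocalization_of_isStrictPair Dp strict⟩
end
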